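/- Let k ≥ 12 be even, set N = (k-4)/2, and let A be the N×N matrix A_{ij} = C(2j,2i) - C(2j,k-2-2i) + δ(i+j = (k-2)/2), D the diagonal matrix with entries 1/C(k-2,2i), and B the matrix B_{ij} = C(2j,2i). Then the kernel of the transpose of A equals the image of the kernel of A under the invertible linear map D·B, i.e. Ker(tA) = D·B·(Ker A). -/

import Mathlib

open Matrix

private lemma aux_nat (n a b : ℕ) (ha : a ≤ n) (hb : b ≤ n) :
    Nat.choose b (n - a) * Nat.choose n b = Nat.choose a (n - b) * Nat.choose n a := by
  rcases lt_or_ge (a + b) n with h | h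
  · have z1 : Nat.choose b (n - a) = 0 := Nat.choose_eq_zero_of_lt (by omega)
    have z2 : Nat.choose a (n - b) = 0 := Nat.choose_eq_zero_of_lt (by omega)
    rw [z1, z2, Nat.zero_mul, Nat.zero_mul]
  · have h1 : n - a ≤ b := by omega
    have e1 := Nat.choose_mul (n := n) h1
    have hna : n - (n - a) = a := by omega
    have hsub : b - (n - a) = a + b - n := by omega
    rw [hna, hsub, Nat.choose_symm ha] at e1
    have e3 : Nat.choose a (a + b - n) = Nat.choose a (n - b) := by
      rw [← Nat.choose_symm (show a + b - n ≤ a by omega)]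
      congr 1
      omega
    rw [e3] at e1
    rw [Nat.mul_comm, e1, Nat.mul_comm]

private lemma aux_rat (n a b : ℕ) (ha : a ≤ n) (hb : b ≤ n) :
    (Nat.choose b (n - a) : ℚ) * ((Nat.choose n a : ℚ))⁻¹
      = (Nat.choose a (n - b) : ℚ) * ((Nat.choose n b : ℚ))⁻¹ := by
  have hA : ((Nat.choose n a : ℚ)) ≠ 0 := by
    exact_mod_cast (Nat.choose_pos ha).ne'
  have hB : ((Nat.choose n b : ℚ)) ≠ 0 := by
    exact_mod_cast (Nat.choose_pos hb).ne'
  have hq : (Nat.choose b (n - a) : ℚ) * (Nat.choose n b : ℚ)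
      = (Nat.choose a (n - b) : ℚ) * (Nat.choose n a : ℚ) := by
    exact_mod_cast aux_nat n a b ha hb
  field_simp
  linear_combination hq

theorem ker_transpose_eq_DB_ker
    (k : ℕ) (hk : 12 ≤ k) (hke : Even k)
    (A D B : Matrix (Fin ((k - 4) / 2)) (Fin ((k - 4) / 2)) ℚ)
    (hA : ∀ i j : Fin ((k - 4) / 2),
      A i j = (Nat.choose (2 * (j.1 + 1)) (2 * (i.1 + 1)) : ℚ)
        - (Nat.choose (2 * (j.1 + 1)) (k - 2 - 2 * (i.1 + 1)) : ℚ)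
        + (if (i.1 + 1) + (j.1 + 1) = (k - 2) / 2 then 1 else 0))
    (hD : D = Matrix.diagonal (fun i : Fin ((k - 4) / 2) =>
      ((Nat.choose (k - 2) (2 * (i.1 + 1)) : ℚ))⁻¹))
    (hB : ∀ i j : Fin ((k - 4) / 2),
      B i j = (Nat.choose (2 * (j.1 + 1)) (2 * (i.1 + 1)) : ℚ)) :
    ∀ v : Fin ((k - 4) / 2) → ℚ,
      Aᵀ.mulVec v = 0 ↔ ∃ w : Fin ((k - 4) / 2) → ℚ,
        A.mulVec w = 0 ∧ v = (D * B).mulVec w := by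
  obtain ⟨m2, hm2⟩ := hke
  -- the key symmetry of Aᵀ * (D * B)
  have key : ∀ i j : Fin ((k - 4) / 2), (Aᵀ * (D * B)) i j = (Aᵀ * (D * B)) j i := by
    intro i j
    rw [Matrix.mul_apply, Matrix.mul_apply]
    have hDB : ∀ (l j' : Fin ((k - 4) / 2)), (D * B) l j'
        = ((Nat.choose (k - 2) (2 * (l.1 + 1)) : ℚ))⁻¹
          * (Nat.choose (2 * (j'.1 + 1)) (2 * (l.1 + 1)) : ℚ) := by
      intro l j'
      rw [hD, Matrix.diagonal_mul, hB]
    simp only [Matrix.transpose_apply, hDB, hA]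
    simp only [add_mul, sub_mul]
    rw [Finset.sum_add_distrib, Finset.sum_add_distrib,
      Finset.sum_sub_distrib, Finset.sum_sub_distrib]
    -- term 1 is symmetric termwise
    have h1 : ∑ l : Fin ((k - 4) / 2), (Nat.choose (2 * (i.1 + 1)) (2 * (l.1 + 1)) : ℚ)
          * (((Nat.choose (k - 2) (2 * (l.1 + 1)) : ℚ))⁻¹
            * (Nat.choose (2 * (j.1 + 1)) (2 * (l.1 + 1)) : ℚ))
        = ∑ l : Fin ((k - 4) / 2), (Nat.choose (2 * (j.1 + 1)) (2 * (l.1 + 1)) : ℚ)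
          * (((Nat.choose (k - 2) (2 * (l.1 + 1)) : ℚ))⁻¹
            * (Nat.choose (2 * (i.1 + 1)) (2 * (l.1 + 1)) : ℚ)) :=
      Finset.sum_congr rfl fun l _ => by ring
    -- term 2 is symmetric via the reindexing l ↦ rev l
    have h2 : ∀ a b : Fin ((k - 4) / 2),
        ∑ l : Fin ((k - 4) / 2), (Nat.choose (2 * (a.1 + 1)) (k - 2 - 2 * (l.1 + 1)) : ℚ)
          * (((Nat.choose (k - 2) (2 * (l.1 + 1)) : ℚ))⁻¹
            * (Nat.choose (2 * (b.1 + 1)) (2 * (l.1 + 1)) : ℚ))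
        = ∑ l : Fin ((k - 4) / 2), (Nat.choose (2 * (b.1 + 1)) (k - 2 - 2 * (l.1 + 1)) : ℚ)
          * (((Nat.choose (k - 2) (2 * (l.1 + 1)) : ℚ))⁻¹
            * (Nat.choose (2 * (a.1 + 1)) (2 * (l.1 + 1)) : ℚ)) := by
      intro a b
      refine Fintype.sum_bijective Fin.rev Fin.rev_involutive.bijective _ _ ?_
      intro l
      have hrev : (Fin.rev l).1 = (k - 4) / 2 - (l.1 + 1) := Fin.val_rev l
      have hl : l.1 < (k - 4) / 2 := l.2
      have e1 : 2 * ((Fin.rev l).1 + 1) = k - 2 - 2 * (l.1 + 1) := by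
        rw [hrev]; omega
      have e2 : k - 2 - 2 * ((Fin.rev l).1 + 1) = 2 * (l.1 + 1) := by
        rw [hrev]; omega
      have e3 : Nat.choose (k - 2) (k - 2 - 2 * (l.1 + 1))
          = Nat.choose (k - 2) (2 * (l.1 + 1)) :=
        Nat.choose_symm (by omega)
      rw [e1, show k - 2 - (k - 2 - 2 * (l.1 + 1)) = 2 * (l.1 + 1) by omega, e3]
      ring
    -- term 3 : the delta sum
    have h3 : ∀ a b : Fin ((k - 4) / 2),
        ∑ l : Fin ((k - 4) / 2), (if (l.1 + 1) + (a.1 + 1) = (k - 2) / 2 then (1:ℚ) else 0)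
          * (((Nat.choose (k - 2) (2 * (l.1 + 1)) : ℚ))⁻¹
            * (Nat.choose (2 * (b.1 + 1)) (2 * (l.1 + 1)) : ℚ))
        = (Nat.choose (2 * (b.1 + 1)) ((k - 2) - 2 * (a.1 + 1)) : ℚ)
          * ((Nat.choose (k - 2) (2 * (a.1 + 1)) : ℚ))⁻¹ := by
      intro a b
      have ha : a.1 < (k - 4) / 2 := a.2
      set l0 : Fin ((k - 4) / 2) := ⟨(k - 4) / 2 - 1 - a.1, by omega⟩ with hl0
      rw [Finset.sum_eq_single_of_mem l0 (Finset.mem_univ _) ?side]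
      case side =>
        intro c _ hc
        have hne : ¬ ((c.1 + 1) + (a.1 + 1) = (k - 2) / 2) := by
          intro hcontra
          apply hc
          apply Fin.ext
          simp only [hl0]
          omega
        rw [if_neg hne, zero_mul]
      have hcond : (l0.1 + 1) + (a.1 + 1) = (k - 2) / 2 := by
        simp only [hl0]
        omega
      rw [if_pos hcond, one_mul]
      have e1 : 2 * (l0.1 + 1) = (k - 2) - 2 * (a.1 + 1) := by
        simp only [hl0]; omega
      have e2 : Nat.choose (k - 2) ((k - 2) - 2 * (a.1 + 1))
          = Nat.choose (k - 2) (2 * (a.1 + 1)) :=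
        Nat.choose_symm (by omega)
      rw [e1, e2]
      ring
    rw [h1, h2 i j, h3 i j, h3 j i]
    congr 1
    exact aux_rat (k - 2) (2 * (i.1 + 1)) (2 * (j.1 + 1))
      (by have := i.2; omega) (by have := j.2; omega)
  have hSymmT : (Aᵀ * (D * B))ᵀ = Aᵀ * (D * B) := by
    ext i j
    rw [Matrix.transpose_apply]
    exact key j i
  have hSymm : ((D * B)ᵀ * A) = Aᵀ * (D * B) := by
    calc (D * B)ᵀ * A = (D * B)ᵀ * Aᵀᵀ := by rw [Matrix.transpose_transpose]
    _ = (Aᵀ * (D * B))ᵀ := (Matrix.transpose_mul _ _).symm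
    _ = Aᵀ * (D * B) := hSymmT
  -- invertibility of D * B
  have hDdet : IsUnit D.det := by
    rw [hD, Matrix.det_diagonal, isUnit_iff_ne_zero, Finset.prod_ne_zero_iff]
    intro i _
    have hip : 0 < Nat.choose (k - 2) (2 * (i.1 + 1)) :=
      Nat.choose_pos (by have := i.2; omega)
    have hne : ((Nat.choose (k - 2) (2 * (i.1 + 1)) : ℚ)) ≠ 0 := by
      exact_mod_cast hip.ne'
    exact inv_ne_zero hne
  have hBdet : IsUnit B.det := by
    have htri : B.BlockTriangular id := by
      intro i j hij
      rw [hB]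
      have hlt : 2 * (j.1 + 1) < 2 * (i.1 + 1) := by
        simp only [id] at hij
        omega
      rw [Nat.choose_eq_zero_of_lt hlt]
      simp
    rw [Matrix.det_of_upperTriangular htri]
    have hone : ∀ i : Fin ((k - 4) / 2), B i i = 1 := by
      intro i
      rw [hB, Nat.choose_self]
      simp
    simp [hone]
  have hDBdet : IsUnit (D * B).det := by
    rw [Matrix.det_mul]
    exact hDdet.mul hBdet
  have hDBTdet : IsUnit ((D * B)ᵀ).det := by
    rwa [Matrix.det_transpose]
  have hinj : Function.Injective ((D * B)ᵀ).mulVec :=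
    Matrix.mulVec_injective_iff_isUnit.2 ((Matrix.isUnit_iff_isUnit_det _).2 hDBTdet)
  have hcancel : ∀ u : Fin ((k - 4) / 2) → ℚ,
      (D * B).mulVec ((D * B)⁻¹.mulVec u) = u := by
    intro u
    rw [Matrix.mulVec_mulVec, Matrix.mul_nonsing_inv _ hDBdet, Matrix.one_mulVec]
  intro v
  constructor
  · intro hv
    refine ⟨(D * B)⁻¹.mulVec v, ?_, (hcancel v).symm⟩
    apply hinj
    rw [Matrix.mulVec_zero, Matrix.mulVec_mulVec, hSymm, ← Matrix.mulVec_mulVec,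
      hcancel v]
    exact hv
  · rintro ⟨w, hw, rfl⟩
    rw [Matrix.mulVec_mulVec, ← hSymm, ← Matrix.mulVec_mulVec, hw, Matrix.mulVec_zero]
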